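/- For all real t > 0 and all v with 0 ≤ v ≤ 1, we have ((1-v) + v·t)/t^v ≤ exp(v·(1-v)·(t-1)²/t). -/

import Mathlib

open Real

private noncomputable def F (v x : ℝ) : ℝ :=
  v * (1 - v) * x ^ 2 / (1 + x) - Real.log (1 + v * x) + v * Real.log (1 + x)

private lemma hden1 {v x : ℝ} (hv0 : 0 ≤ v) (hv1 : v ≤ 1) (hx : -1 < x) :
    0 < 1 + v * x := by
  rcases le_or_gt 0 x with h | h
  · nlinarith
  · nlinarith

private lemma F_hasDerivAt {v x : ℝ} (hv0 : 0 ≤ v) (hv1 : v ≤ 1) (hx : -1 < x) :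
    HasDerivAt (F v)
      (v * (1 - v) * x * ((1 - v) + v * (1 + x) ^ 2) / ((1 + x) ^ 2 * (1 + v * x))) x := by
  have hx0 : (0:ℝ) < 1 + x := by linarith
  have hx0' : (1:ℝ) + x ≠ 0 := ne_of_gt hx0
  have hvx : (0:ℝ) < 1 + v * x := hden1 hv0 hv1 hx
  have hvx' : (1:ℝ) + v * x ≠ 0 := ne_of_gt hvx
  have hnum : HasDerivAt (fun y : ℝ => v * (1 - v) * y ^ 2) (v * (1 - v) * (2 * x)) x := by
    simpa using (hasDerivAt_pow 2 x).const_mul (v * (1 - v))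
  have hd : HasDerivAt (fun y : ℝ => 1 + y) 1 x := by
    simpa using (hasDerivAt_id x).const_add 1
  have h1 := hnum.div hd hx0'
  have hin : HasDerivAt (fun y : ℝ => 1 + v * y) v x := by
    simpa using ((hasDerivAt_id x).const_mul v).const_add 1
  have h2 := hin.log hvx'
  have h3 := (hd.log hx0').const_mul v
  have := (h1.sub h2).add h3
  refine this.congr_deriv ?_
  field_simp
  ring
private lemma F_zero (v : ℝ) : F v 0 = 0 := by simp [F]

private lemma F_nonneg {v x : ℝ} (hv0 : 0 ≤ v) (hv1 : v ≤ 1) (hx : -1 < x) :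
    0 ≤ F v x := by
  have hdiff : ∀ y ∈ Set.Ioi (-1 : ℝ), DifferentiableAt ℝ (F v) y := fun y hy =>
    (F_hasDerivAt hv0 hv1 hy).differentiableAt
  rcases le_or_gt 0 x with h | h
  · -- monotone on [0, ∞)
    have hmono : MonotoneOn (F v) (Set.Ici 0) := by
      apply monotoneOn_of_deriv_nonneg (convex_Ici 0)
      · exact fun y hy => ((hdiff y (by simp at hy ⊢; linarith)).continuousAt).continuousWithinAt
      · intro y hy
        exact (hdiff y (by simp [interior_Ici] at hy ⊢; linarith)).differentiableWithinAt
      · intro y hy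
        simp only [interior_Ici, Set.mem_Ioi] at hy
        have hy' : (-1:ℝ) < y := by linarith
        rw [(F_hasDerivAt hv0 hv1 hy').deriv]
        have hvy : 0 < 1 + v * y := hden1 hv0 hv1 hy'
        apply div_nonneg
        · have hbr : 0 ≤ (1 - v) + v * (1 + y) ^ 2 := by nlinarith
          have h2 : 0 ≤ v * (1 - v) := by nlinarith
          exact mul_nonneg (mul_nonneg h2 hy.le) hbr
        · positivity
    have := hmono (Set.mem_Ici.2 le_rfl) (Set.mem_Ici.2 h) h
    rwa [F_zero] at this
  · -- antitone on [x, 0]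
    have hanti : AntitoneOn (F v) (Set.Icc x 0) := by
      apply antitoneOn_of_deriv_nonpos (convex_Icc x 0)
      · exact fun y hy => ((hdiff y (by simp at hy ⊢; linarith [hy.1])).continuousAt).continuousWithinAt
      · intro y hy
        rw [interior_Icc] at hy
        exact (hdiff y (by simp; linarith [hy.1])).differentiableWithinAt
      · intro y hy
        rw [interior_Icc] at hy
        have hy' : (-1:ℝ) < y := by linarith [hy.1]
        rw [(F_hasDerivAt hv0 hv1 hy').deriv]
        have hvy : 0 < 1 + v * y := hden1 hv0 hv1 hy'
        have hy0 : y < 0 := hy.2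
        apply div_nonpos_of_nonpos_of_nonneg
        · have h1 : 0 ≤ (1 - v) + v * (1 + y) ^ 2 := by nlinarith
          have h2 : 0 ≤ v * (1 - v) := by nlinarith
          exact mul_nonpos_of_nonpos_of_nonneg (mul_nonpos_of_nonneg_of_nonpos h2 hy0.le) h1
        · positivity
    have := hanti (Set.mem_Icc.2 ⟨le_rfl, h.le⟩) (Set.mem_Icc.2 ⟨h.le, le_rfl⟩) h.le
    rwa [F_zero] at this

theorem stmt0 (t v : ℝ) (ht : 0 < t) (hv0 : 0 ≤ v) (hv1 : v ≤ 1) :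
    ((1 - v) + v * t) / t ^ v ≤ Real.exp (v * (1 - v) * (t - 1) ^ 2 / t) := by
  have hx : -1 < t - 1 := by linarith
  have hF := F_nonneg hv0 hv1 hx
  have hA : 0 < (1 - v) + v * t := by rcases eq_or_lt_of_le hv0 with h | h; · nlinarith
                                      · nlinarith
  have hAe : (1:ℝ) + v * (t - 1) = (1 - v) + v * t := by ring
  have ht1 : (1:ℝ) + (t - 1) = t := by ring
  have hlog : Real.log ((1 - v) + v * t) ≤ v * Real.log t + v * (1 - v) * (t - 1) ^ 2 / t := by
    have := hF
    unfold F at this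
    rw [hAe, ht1] at this
    linarith
  have htv : t ^ v = Real.exp (v * Real.log t) := by
    rw [Real.rpow_def_of_pos ht, mul_comm]
  rw [htv]
  rw [div_le_iff₀ (Real.exp_pos _), ← Real.exp_add]
  calc ((1 - v) + v * t) = Real.exp (Real.log ((1 - v) + v * t)) := (Real.exp_log hA).symm
    _ ≤ Real.exp (v * (1 - v) * (t - 1) ^ 2 / t + v * Real.log t) := by
        apply Real.exp_le_exp.2; linarith
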